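/- For any finite positive Borel measure ρ on [−1,1], the condition Σ_{n≥1} n^{-2} ∫_{−1}^{1} (Σ_{j=1}^{n} t^{j})² ρ(dt) < ∞ holds if and only if ∫_{−1}^{1} (1−t)^{-1} ρ(dt) < ∞. -/

import Mathlib

open MeasureTheory Finset ENNReal

noncomputable section

namespace Stmt16Aux

/-- partial geometric sum `t + t^2 + ... + t^m`. -/
def S (m : ℕ) (t : ℝ) : ℝ := ∑ j ∈ Finset.Icc 1 m, t ^ j

lemma S_mul (m : ℕ) (t : ℝ) : S m t * (1 - t) = t * (1 - t ^ m) := by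
  induction m with
  | zero => simp [S]
  | succ m ih =>
    have h : S (m + 1) t = S m t + t ^ (m + 1) := by
      unfold S
      rw [Finset.sum_Icc_succ_top (by omega)]
    rw [h]
    linear_combination ih

lemma abs_S_le_card (m : ℕ) (t : ℝ) (ht : |t| ≤ 1) : |S m t| ≤ m := by
  unfold S
  calc |∑ j ∈ Finset.Icc 1 m, t ^ j| ≤ ∑ j ∈ Finset.Icc 1 m, |t ^ j| :=
        Finset.abs_sum_le_sum_abs _ _
    _ ≤ ∑ j ∈ Finset.Icc 1 m, 1 := by
        refine Finset.sum_le_sum fun j _ => ?_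
        rw [abs_pow]
        exact pow_le_one₀ (abs_nonneg t) ht
    _ = m := by simp

lemma abs_S_le (m : ℕ) (t : ℝ) (ht : |t| ≤ 1) (ht1 : t < 1) :
    |S m t| ≤ 2 / (1 - t) := by
  have hu : 0 < 1 - t := by linarith
  rw [le_div_iff₀ hu]
  have h := S_mul m t
  have h1 : |S m t * (1 - t)| = |S m t| * (1 - t) := by
    rw [abs_mul, abs_of_pos hu]
  have h2 : |t * (1 - t ^ m)| ≤ 2 := by
    rw [abs_mul]
    have htm : |t ^ m| ≤ 1 := by rw [abs_pow]; exact pow_le_one₀ (abs_nonneg t) ht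
    have : |1 - t ^ m| ≤ 2 := by
      cases' abs_le.mp htm with h3 h4
      rw [abs_le]; constructor <;> linarith
    calc |t| * |1 - t ^ m| ≤ 1 * 2 := by
          exact mul_le_mul ht this (abs_nonneg _) zero_le_one
      _ = 2 := by ring
  rw [← h1, h]
  exact h2

lemma pow_le_aux (t : ℝ) (h0 : 0 < t) (h1 : t < 1) (m : ℕ) :
    t ^ m ≤ 1 / (1 + m * (1 - t)) := by
  have hu : 0 < 1 - t := by linarith
  have hd : (0:ℝ) < 1 + m * (1 - t) := by positivity
  have key : t ≤ 1 / (1 + (1 - t)) := by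
    rw [le_div_iff₀ (by linarith)]
    nlinarith
  have h2 : t ^ m ≤ (1 / (1 + (1 - t))) ^ m :=
    pow_le_pow_left₀ h0.le key m
  refine h2.trans ?_
  rw [div_pow, one_pow]
  rw [div_le_div_iff₀ (by positivity) hd]
  have := one_add_mul_le_pow (a := 1 - t) (by linarith) m
  nlinarith [this]

lemma S_ge (m : ℕ) (t : ℝ) (ht : 1/2 < t) (ht1 : t < 1) (hm : 1 ≤ (m : ℝ) * (1 - t)) :
    1 / (4 * (1 - t)) ≤ S m t := by
  have hu : 0 < 1 - t := by linarith
  have htm : t ^ m ≤ 1/2 := by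
    refine (pow_le_aux t (by linarith) ht1 m).trans ?_
    rw [div_le_div_iff₀ (by positivity) (by norm_num)]
    linarith
  have h := S_mul m t
  rw [div_le_iff₀ (by positivity)]
  nlinarith

def D (n : ℕ) : ℝ≥0∞ := ENNReal.ofReal (((n : ℝ) + 1) ^ 2)

def F (n : ℕ) (t : ℝ) : ℝ≥0∞ := ENNReal.ofReal ((S (n + 1) t) ^ 2) * (D n)⁻¹

def G (t : ℝ) : ℝ≥0∞ := ∑' n, F n t

lemma D_ne_zero (n : ℕ) : D n ≠ 0 := by
  simp only [D, ne_eq, ENNReal.ofReal_eq_zero, not_le]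
  positivity

lemma D_ne_top (n : ℕ) : D n ≠ ⊤ := ENNReal.ofReal_ne_top

lemma real_tail (N : ℕ) (hN : 1 ≤ N) (K : ℕ) :
    ∑ k ∈ Finset.range K, (1:ℝ) / ((k:ℝ) + (N:ℝ) + 1) ^ 2 ≤ 1 / (N:ℝ) := by
  have hN' : (1:ℝ) ≤ N := by exact_mod_cast hN
  have key : ∀ a : ℝ, 1 ≤ a → 1/(a+1)^2 ≤ 1/a - 1/(a+1) := by
    intro a ha
    have h1 : 1/a - 1/(a+1) = 1/(a*(a+1)) := by
      field_simp
      ring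
    rw [h1]
    apply one_div_le_one_div_of_le (by positivity)
    nlinarith
  calc ∑ k ∈ Finset.range K, (1:ℝ)/((k:ℝ)+N+1)^2
      ≤ ∑ k ∈ Finset.range K,
          ((fun k : ℕ => 1/((k:ℝ) + N)) k - (fun k : ℕ => 1/((k:ℝ) + N)) (k+1)) := by
        refine Finset.sum_le_sum fun k _ => ?_
        have hk : (0:ℝ) ≤ k := Nat.cast_nonneg k
        have := key ((k:ℝ)+N) (by linarith)
        simp only []
        push_cast
        rw [show ((k:ℝ) + 1 + N) = (k:ℝ) + N + 1 by ring]
        exact this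
    _ = (fun k : ℕ => 1/((k:ℝ) + N)) 0 - (fun k : ℕ => 1/((k:ℝ) + N)) K :=
        Finset.sum_range_sub' _ K
    _ ≤ 1 / N := by
        simp only [Nat.cast_zero, zero_add]
        have : (0:ℝ) ≤ 1/((K:ℝ) + N) := by positivity
        linarith

lemma tsum_D_inv_le (N : ℕ) (hN : 1 ≤ N) :
    ∑' k : ℕ, (D (k + N))⁻¹ ≤ ENNReal.ofReal (1 / (N:ℝ)) := by
  refine ENNReal.tsum_le_of_sum_range_le fun K => ?_
  have h1 : ∀ k : ℕ, (D (k + N))⁻¹ = ENNReal.ofReal (1 / ((k:ℝ) + N + 1) ^ 2) := by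
    intro k
    rw [one_div, ENNReal.ofReal_inv_of_pos (by positivity)]
    unfold D
    push_cast
    ring_nf
  simp only [h1]
  rw [← ENNReal.ofReal_sum_of_nonneg (fun i _ => by positivity)]
  exact ENNReal.ofReal_le_ofReal (real_tail N hN K)

lemma F_le_one (n : ℕ) (t : ℝ) (ht : |t| ≤ 1) : F n t ≤ 1 := by
  have h1 : (S (n + 1) t) ^ 2 ≤ ((n : ℝ) + 1) ^ 2 := by
    have := abs_S_le_card (n + 1) t ht
    have h2 : ((n + 1 : ℕ) : ℝ) = (n : ℝ) + 1 := by push_cast; ring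
    rw [h2] at this
    nlinarith [abs_nonneg (S (n + 1) t), sq_abs (S (n + 1) t)]
  calc F n t ≤ D n * (D n)⁻¹ := by
        unfold F
        gcongr
        exact ENNReal.ofReal_le_ofReal h1
    _ ≤ 1 := ENNReal.mul_inv_le_one _

lemma G_one : G 1 = ⊤ := by
  have h : ∀ n : ℕ, F n 1 = 1 := by
    intro n
    have hS : S (n + 1) 1 = ((n : ℝ) + 1) := by
      unfold S
      simp [Nat.card_Icc]
    unfold F
    rw [hS]
    have hD : ENNReal.ofReal (((n:ℝ) + 1) ^ 2) = D n := rfl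
    rw [hD, ENNReal.mul_inv_cancel (D_ne_zero n) (D_ne_top n)]
  unfold G
  simp only [h]
  exact ENNReal.tsum_const_eq_top_of_ne_zero one_ne_zero

set_option maxHeartbeats 1000000 in
lemma G_le (t : ℝ) (ht : t ∈ Set.Icc (-1:ℝ) 1) :
    G t ≤ 6 * (ENNReal.ofReal (1 - t))⁻¹ := by
  rcases eq_or_lt_of_le ht.2 with h1 | h1
  · rw [← h1]
    simp
  have habs : |t| ≤ 1 := abs_le.mpr ⟨ht.1, ht.2⟩
  have hu : 0 < 1 - t := by linarith
  set B : ℝ := 2 / (1 - t) with hB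
  have hB0 : 0 < B := by positivity
  have hB1 : 1 ≤ B := by
    rw [hB, le_div_iff₀ hu]
    linarith [ht.1]
  set N : ℕ := ⌈B⌉₊ with hNdef
  have hN1 : 1 ≤ N := Nat.one_le_ceil_iff.mpr hB0
  have hNB : B ≤ (N : ℝ) := Nat.le_ceil B
  have hNB' : (N : ℝ) < B + 1 := Nat.ceil_lt_add_one hB0.le
  have hsplit : G t = ∑ n ∈ Finset.range N, F n t + ∑' k, F (k + N) t :=
    (Summable.sum_add_tsum_nat_add' (k := N) ENNReal.summable).symm
  have hfirst : ∑ n ∈ Finset.range N, F n t ≤ (N : ℝ≥0∞) := by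
    calc ∑ n ∈ Finset.range N, F n t ≤ ∑ _n ∈ Finset.range N, 1 :=
          Finset.sum_le_sum fun n _ => F_le_one n t habs
      _ = (N : ℝ≥0∞) := by simp
  have hsecond : ∑' k, F (k + N) t ≤ ENNReal.ofReal B := by
    have hFk : ∀ k : ℕ, F (k + N) t ≤ ENNReal.ofReal (B ^ 2) * (D (k + N))⁻¹ := by
      intro k
      unfold F
      refine mul_le_mul_left (ENNReal.ofReal_le_ofReal ?_) _
      have h2 := abs_S_le (k + N + 1) t habs h1
      nlinarith [abs_nonneg (S (k + N + 1) t), sq_abs (S (k + N + 1) t), hB]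
    calc ∑' k, F (k + N) t ≤ ∑' k, ENNReal.ofReal (B ^ 2) * (D (k + N))⁻¹ :=
          ENNReal.tsum_le_tsum hFk
      _ = ENNReal.ofReal (B ^ 2) * ∑' k, (D (k + N))⁻¹ := ENNReal.tsum_mul_left
      _ ≤ ENNReal.ofReal (B ^ 2) * ENNReal.ofReal (1 / (N : ℝ)) := by
          gcongr
          exact tsum_D_inv_le N hN1
      _ = ENNReal.ofReal (B ^ 2 * (1 / (N : ℝ))) := by
          rw [← ENNReal.ofReal_mul (by positivity)]
      _ ≤ ENNReal.ofReal B := by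
          refine ENNReal.ofReal_le_ofReal ?_
          rw [mul_one_div, div_le_iff₀ (by positivity)]
          nlinarith
  have hN' : (N : ℝ≥0∞) = ENNReal.ofReal (N : ℝ) := by simp
  calc G t ≤ (N : ℝ≥0∞) + ENNReal.ofReal B := by
        rw [hsplit]; exact add_le_add hfirst hsecond
    _ = ENNReal.ofReal ((N : ℝ) + B) := by
        rw [hN', ← ENNReal.ofReal_add (by positivity) hB0.le]
    _ ≤ ENNReal.ofReal (3 * B) := by
        refine ENNReal.ofReal_le_ofReal ?_
        linarith
    _ = 6 * (ENNReal.ofReal (1 - t))⁻¹ := by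
        rw [show (3 : ℝ) * B = 6 / (1 - t) by rw [hB]; ring,
          ENNReal.ofReal_div_of_pos hu]
        rw [ENNReal.div_eq_inv_mul, mul_comm]
        norm_num

set_option maxHeartbeats 1000000 in
lemma G_ge (t : ℝ) (ht : 1/2 < t) (ht1 : t ≤ 1) :
    (ENNReal.ofReal (1 - t))⁻¹ ≤ 256 * G t := by
  rcases eq_or_lt_of_le ht1 with h1 | h1
  · rw [h1, G_one]
    simp
  have hu : 0 < 1 - t := by linarith
  have hu2 : 1 - t < 1/2 := by linarith
  set N : ℕ := ⌈1 / (1 - t)⌉₊ with hNdef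
  have hinv2 : (2:ℝ) ≤ 1 / (1 - t) := by
    rw [le_div_iff₀ hu]; linarith
  have hNge : 1 / (1 - t) ≤ (N : ℝ) := Nat.le_ceil _
  have hNle : (N : ℝ) ≤ 2 / (1 - t) := by
    have := Nat.ceil_lt_add_one (by positivity : (0:ℝ) ≤ 1 / (1 - t))
    have h2 : 1 / (1 - t) + 1 ≤ 2 / (1 - t) := by
      rw [div_add' _ _ _ hu.ne', div_le_div_iff₀ hu hu]
      nlinarith
    linarith
  have hN1 : 1 ≤ N := by
    have : (1:ℝ) ≤ (N:ℝ) := by linarith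
    exact_mod_cast this
  have hterm : ∀ n ∈ Finset.Ico (N - 1) (2 * N), ENNReal.ofReal (1/256) ≤ F n t := by
    intro n hn
    rw [Finset.mem_Ico] at hn
    have hm1 : N ≤ n + 1 := by omega
    have hm2 : n + 1 ≤ 2 * N := by omega
    have hm1' : (N : ℝ) ≤ (n : ℝ) + 1 := by exact_mod_cast hm1
    have hm2' : (n : ℝ) + 1 ≤ 2 * (N : ℝ) := by exact_mod_cast hm2
    have hSge : 1 / (4 * (1 - t)) ≤ S (n + 1) t := by
      refine S_ge (n + 1) t ht h1 ?_
      push_cast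
      have h3 : 1 / (1 - t) ≤ (n:ℝ) + 1 := le_trans hNge hm1'
      rw [div_le_iff₀ hu] at h3
      linarith
    have hS2 : (1 / (4 * (1 - t))) ^ 2 ≤ (S (n + 1) t) ^ 2 := by
      have h0 : (0:ℝ) ≤ 1 / (4 * (1 - t)) := by positivity
      nlinarith
    have hD : D n ≤ ENNReal.ofReal (16 / (1 - t) ^ 2) := by
      unfold D
      refine ENNReal.ofReal_le_ofReal ?_
      have : (n : ℝ) + 1 ≤ 4 / (1 - t) := by
        calc (n : ℝ) + 1 ≤ 2 * (N : ℝ) := hm2'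
          _ ≤ 2 * (2 / (1 - t)) := by linarith
          _ = 4 / (1 - t) := by ring
      have h0 : (0:ℝ) ≤ (n : ℝ) + 1 := by positivity
      rw [show (16:ℝ) / (1-t)^2 = (4 / (1-t))^2 by rw [div_pow]; norm_num]
      nlinarith
    calc ENNReal.ofReal (1/256)
        = ENNReal.ofReal ((1 / (4 * (1 - t))) ^ 2) / ENNReal.ofReal (16 / (1 - t) ^ 2) := by
          rw [← ENNReal.ofReal_div_of_pos (by positivity)]
          congr 1
          field_simp
          ring
      _ ≤ ENNReal.ofReal ((S (n + 1) t) ^ 2) / D n := by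
          exact ENNReal.div_le_div (ENNReal.ofReal_le_ofReal hS2) hD
      _ = F n t := by rw [F, div_eq_mul_inv]
  have hcard : (Finset.Ico (N - 1) (2 * N)).card = N + 1 := by
    rw [Nat.card_Ico]; omega
  have hsum : ENNReal.ofReal ((N : ℝ) / 256) ≤ G t := by
    calc ENNReal.ofReal ((N : ℝ) / 256)
        ≤ ENNReal.ofReal (((N:ℝ) + 1) * (1/256)) := by
          refine ENNReal.ofReal_le_ofReal ?_
          nlinarith [Nat.cast_nonneg (α := ℝ) N]
      _ = ENNReal.ofReal ((N:ℝ) + 1) * ENNReal.ofReal (1/256) :=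
          ENNReal.ofReal_mul (by positivity)
      _ = (N + 1 : ℕ) * ENNReal.ofReal (1/256) := by
          congr 1
          rw [show ((N:ℝ) + 1) = ((N + 1 : ℕ) : ℝ) by push_cast; ring,
            ENNReal.ofReal_natCast]
      _ = ∑ _n ∈ Finset.Ico (N - 1) (2 * N), ENNReal.ofReal (1/256) := by
          rw [Finset.sum_const, hcard]
          simp [nsmul_eq_mul]
      _ ≤ ∑ n ∈ Finset.Ico (N - 1) (2 * N), F n t := Finset.sum_le_sum hterm
      _ ≤ G t := ENNReal.sum_le_tsum _
  calc (ENNReal.ofReal (1 - t))⁻¹ = ENNReal.ofReal (1 / (1 - t)) := by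
        rw [one_div, ENNReal.ofReal_inv_of_pos hu]
    _ ≤ ENNReal.ofReal (256 * ((N : ℝ) / 256)) := by
        refine ENNReal.ofReal_le_ofReal ?_
        rw [mul_div_cancel₀ _ (by norm_num : (256:ℝ) ≠ 0)]
        linarith
    _ = 256 * ENNReal.ofReal ((N : ℝ) / 256) := by
        rw [ENNReal.ofReal_mul (by norm_num)]
        norm_num
    _ ≤ 256 * G t := by gcongr

lemma S_cont (m : ℕ) : Continuous (S m) := by
  unfold S
  exact continuous_finset_sum _ fun j _ => continuous_pow j

lemma F_meas (n : ℕ) : Measurable (F n) := by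
  unfold F
  exact (((S_cont (n + 1)).pow 2).measurable.ennreal_ofReal).mul_const _

lemma G_meas : Measurable G := Measurable.ennreal_tsum F_meas

end Stmt16Aux

open Stmt16Aux in
/-- For a finite positive Borel measure `ρ` on `[-1,1]`:
`Σ_n n⁻² ∫ (Σ_{j=1}^n t^j)² ρ(dt) < ∞ ⟺ ∫ (1-t)⁻¹ ρ(dt) < ∞`. -/
theorem stmt16 (ρ : Measure ℝ) [IsFiniteMeasure ρ]
    (hsupp : ρ (Set.Icc (-1 : ℝ) 1)ᶜ = 0) :
    (Summable fun n : ℕ =>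
        (∫ t, (∑ j ∈ Finset.Icc 1 (n + 1), t ^ j) ^ 2 ∂ρ) / ((n : ℝ) + 1) ^ 2) ↔
      ∫⁻ t, (ENNReal.ofReal (1 - t))⁻¹ ∂ρ < ⊤ := by
  have hae : ∀ᵐ t ∂ρ, t ∈ Set.Icc (-1 : ℝ) 1 := by
    rw [ae_iff]
    exact hsupp
  have hrw : (fun n : ℕ =>
      (∫ t, (∑ j ∈ Finset.Icc 1 (n + 1), t ^ j) ^ 2 ∂ρ) / ((n : ℝ) + 1) ^ 2)
      = fun n : ℕ => (∫ t, (S (n + 1) t) ^ 2 ∂ρ) / ((n : ℝ) + 1) ^ 2 := rfl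
  rw [hrw]
  have hint : ∀ n : ℕ, Integrable (fun t => (S (n + 1) t) ^ 2) ρ := by
    intro n
    refine Integrable.mono' (integrable_const (((n : ℝ) + 1) ^ 2))
      ((S_cont (n + 1)).pow 2).aestronglyMeasurable ?_
    refine hae.mono fun t ht => ?_
    rw [Real.norm_eq_abs, abs_of_nonneg (sq_nonneg _)]
    have h1 := abs_S_le_card (n + 1) t (abs_le.mpr ⟨ht.1, ht.2⟩)
    push_cast at h1
    nlinarith [abs_nonneg (S (n + 1) t), sq_abs (S (n + 1) t)]
  have hkey : ∀ n : ℕ,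
      ENNReal.ofReal ((∫ t, (S (n + 1) t) ^ 2 ∂ρ) / ((n : ℝ) + 1) ^ 2)
        = ∫⁻ t, F n t ∂ρ := by
    intro n
    rw [ENNReal.ofReal_div_of_pos (by positivity),
      MeasureTheory.ofReal_integral_eq_lintegral_ofReal (hint n)
        (Filter.Eventually.of_forall fun t => sq_nonneg _)]
    have h2 : ∫⁻ t, F n t ∂ρ
        = (∫⁻ t, ENNReal.ofReal ((S (n + 1) t) ^ 2) ∂ρ) * (D n)⁻¹ := by
      simp only [F]
      exact lintegral_mul_const _ ((S_cont (n + 1)).pow 2).measurable.ennreal_ofReal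
    rw [h2, div_eq_mul_inv]
    rfl
  have hsum_eq : (∑' n, ∫⁻ t, F n t ∂ρ) = ∫⁻ t, G t ∂ρ :=
    (lintegral_tsum fun n => (F_meas n).aemeasurable).symm
  have hnn : ∀ n : ℕ, 0 ≤ (∫ t, (S (n + 1) t) ^ 2 ∂ρ) / ((n : ℝ) + 1) ^ 2 :=
    fun n => div_nonneg (integral_nonneg fun t => sq_nonneg _) (by positivity)
  have hiff1 : (Summable fun n : ℕ => (∫ t, (S (n + 1) t) ^ 2 ∂ρ) / ((n : ℝ) + 1) ^ 2)
      ↔ (∫⁻ t, G t ∂ρ) ≠ ⊤ := by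
    constructor
    · intro h
      rw [← hsum_eq, tsum_congr fun n => (hkey n).symm,
        ← ENNReal.ofReal_tsum_of_nonneg hnn h]
      exact ENNReal.ofReal_ne_top
    · intro h
      have h2 : (∑' n, ENNReal.ofReal
          ((∫ t, (S (n + 1) t) ^ 2 ∂ρ) / ((n : ℝ) + 1) ^ 2)) ≠ ⊤ := by
        rw [tsum_congr hkey, hsum_eq]
        exact h
      have h3 := ENNReal.summable_toReal h2
      have h4 : (fun n : ℕ => (ENNReal.ofReal
          ((∫ t, (S (n + 1) t) ^ 2 ∂ρ) / ((n : ℝ) + 1) ^ 2)).toReal)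
          = fun n : ℕ => (∫ t, (S (n + 1) t) ^ 2 ∂ρ) / ((n : ℝ) + 1) ^ 2 :=
        funext fun n => ENNReal.toReal_ofReal (hnn n)
      rwa [h4] at h3
  rw [hiff1]
  constructor
  · intro hG
    calc ∫⁻ t, (ENNReal.ofReal (1 - t))⁻¹ ∂ρ
        ≤ ∫⁻ t, (256 * G t + 2) ∂ρ := by
          refine lintegral_mono_ae (hae.mono fun t ht => ?_)
          rcases le_or_gt t (1/2) with h2 | h2
          · have hle : (ENNReal.ofReal (1 - t))⁻¹ ≤ 2 := by
              calc (ENNReal.ofReal (1 - t))⁻¹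
                  ≤ (ENNReal.ofReal (1/2))⁻¹ := by
                    gcongr
                    linarith
                _ = ENNReal.ofReal ((1/2 : ℝ)⁻¹) := by
                    rw [ENNReal.ofReal_inv_of_pos (by norm_num)]
                _ = 2 := by norm_num
            exact hle.trans le_add_self
          · exact (G_ge t h2 ht.2).trans le_self_add
      _ = 256 * (∫⁻ t, G t ∂ρ) + 2 * ρ Set.univ := by
          rw [lintegral_add_right _ measurable_const,
            lintegral_const_mul' _ _ (by norm_num), lintegral_const]
      _ < ⊤ := by
          refine ENNReal.add_lt_top.mpr ⟨?_, ?_⟩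
          · exact ENNReal.mul_lt_top (by norm_num) (lt_top_iff_ne_top.mpr hG)
          · exact ENNReal.mul_lt_top (by norm_num) (measure_lt_top ρ _)
  · intro h
    have hle : ∫⁻ t, G t ∂ρ ≤ 6 * ∫⁻ t, (ENNReal.ofReal (1 - t))⁻¹ ∂ρ := by
      rw [← lintegral_const_mul' _ _ (by norm_num : (6 : ℝ≥0∞) ≠ ⊤)]
      exact lintegral_mono_ae (hae.mono fun t ht => G_le t ht)
    exact (lt_of_le_of_lt hle (ENNReal.mul_lt_top (by norm_num) h)).ne
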